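/- Let W ⊆ V(G) be a clique such that N_G(x) \ W = N_G(y) \ W for all x, y ∈ W, and let d be the common degree of vertices in W. Then d + 1 − α(d+2) is an eigenvalue of B_α(G) with multiplicity at least |W| − 1. -/

import Mathlib

open Matrix

/-- The adjacency matrix of `G` over `ℝ`. -/
noncomputable def adjM {V : Type*} [Fintype V] [DecidableEq V]
    (G : SimpleGraph V) [DecidableRel G.Adj] : Matrix V V ℝ :=
  G.adjMatrix ℝ

/-- The diagonal degree matrix of `G`. -/
noncomputable def degM {V : Type*} [Fintype V] [DecidableEq V]
    (G : SimpleGraph V) [DecidableRel G.Adj] : Matrix V V ℝ :=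
  Matrix.diagonal fun v => (G.degree v : ℝ)

/-- The Laplacian matrix `L(G) = D(G) - A(G)`. -/
noncomputable def lapM {V : Type*} [Fintype V] [DecidableEq V]
    (G : SimpleGraph V) [DecidableRel G.Adj] : Matrix V V ℝ :=
  degM G - adjM G

/-- The matrix `B_α(G) = α A(G) + (1-α) L(G)`. -/
noncomputable def Balpha {V : Type*} [Fintype V] [DecidableEq V]
    (G : SimpleGraph V) [DecidableRel G.Adj] (α : ℝ) : Matrix V V ℝ :=
  α • adjM G + (1 - α) • lapM G

lemma Balpha_apply {V : Type*} [Fintype V] [DecidableEq V]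
    (G : SimpleGraph V) [DecidableRel G.Adj] (α : ℝ) (j k : V) :
    Balpha G α j k = α * (if G.Adj j k then 1 else 0)
      + (1 - α) * ((if j = k then (G.degree j : ℝ) else 0)
          - (if G.Adj j k then 1 else 0)) := by
  simp [Balpha, adjM, degM, lapM, Matrix.add_apply, Matrix.sub_apply,
    Matrix.diagonal_apply, Matrix.smul_apply, SimpleGraph.adjMatrix_apply]

theorem stmt_11 {V : Type*} [Fintype V] [DecidableEq V]
    (G : SimpleGraph V) [DecidableRel G.Adj] (α : ℝ)
    (hα0 : 0 ≤ α) (hα1 : α ≤ 1)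
    (W : Finset V)
    (hclique : ∀ u ∈ W, ∀ v ∈ W, u ≠ v → G.Adj u v)
    (hnbr : ∀ x ∈ W, ∀ y ∈ W, G.neighborFinset x \ W = G.neighborFinset y \ W)
    (d : ℕ) (hdeg : ∀ x ∈ W, G.degree x = d) :
    W.card - 1 ≤
      Module.finrank ℝ
        ↥(Module.End.eigenspace (Matrix.toLin' (Balpha G α))
            ((d : ℝ) + 1 - α * ((d : ℝ) + 2))) := by
  rcases Nat.lt_or_ge W.card 2 with hc | hc
  · have h0 : W.card - 1 = 0 := by omega
    rw [h0]; exact Nat.zero_le _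
  obtain ⟨y₀, hy₀⟩ : W.Nonempty := Finset.card_pos.mp (by omega)
  set μ : ℝ := (d : ℝ) + 1 - α * ((d : ℝ) + 2) with hμ
  -- membership of e_x - e_{y₀} in the eigenspace
  have key : ∀ x ∈ W, x ≠ y₀ →
      ((Pi.single x 1 : V → ℝ) - Pi.single y₀ 1) ∈
        Module.End.eigenspace (Matrix.toLin' (Balpha G α)) μ := by
    intro x hx hxy
    rw [Module.End.mem_eigenspace_iff]
    rw [Matrix.toLin'_apply]
    rw [Matrix.mulVec_sub, Matrix.mulVec_single, Matrix.mulVec_single]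
    funext j
    have hadjxy : G.Adj x y₀ := hclique x hx y₀ hy₀ hxy
    simp only [Pi.sub_apply, Pi.smul_apply, smul_eq_mul, MulOpposite.op_one, one_smul,
      Matrix.col_apply]
    rw [Balpha_apply, Balpha_apply]
    by_cases hjx : j = x
    · subst hjx
      rw [Pi.single_eq_same, Pi.single_eq_of_ne hxy]
      simp [hadjxy, G.irrefl, hdeg j hx, hμ, hxy]
      ring
    · by_cases hjy : j = y₀
      · subst hjy
        rw [Pi.single_eq_of_ne (Ne.symm hxy), Pi.single_eq_same]
        simp [hadjxy.symm, G.irrefl, hdeg j hy₀, hμ, Ne.symm hxy]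
        ring
      · rw [Pi.single_eq_of_ne hjx, Pi.single_eq_of_ne hjy]
        have hadj : G.Adj j x ↔ G.Adj j y₀ := by
          by_cases hjW : j ∈ W
          · exact iff_of_true (hclique j hjW x hx hjx) (hclique j hjW y₀ hy₀ hjy)
          · have hset := hnbr x hx y₀ hy₀
            constructor <;> intro h
            · have hmem : j ∈ G.neighborFinset x \ W := by
                simp [Finset.mem_sdiff, SimpleGraph.mem_neighborFinset, h.symm, hjW]
              rw [hset] at hmem
              simp [Finset.mem_sdiff, SimpleGraph.mem_neighborFinset] at hmem
              exact hmem.1.symm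
            · have hmem : j ∈ G.neighborFinset y₀ \ W := by
                simp [Finset.mem_sdiff, SimpleGraph.mem_neighborFinset, h.symm, hjW]
              rw [← hset] at hmem
              simp [Finset.mem_sdiff, SimpleGraph.mem_neighborFinset] at hmem
              exact hmem.1.symm
        by_cases h : G.Adj j x
        · simp [h, hadj.mp h, hjx, hjy]
        · simp [h, (not_iff_not.mpr hadj).mp h, hjx, hjy]
  -- the linearly independent family
  let S := W.erase y₀
  let v : S → (V → ℝ) := fun i => (Pi.single (i : V) 1 : V → ℝ) - Pi.single y₀ 1
  have hvmem : ∀ i : S, v i ∈ Module.End.eigenspace (Matrix.toLin' (Balpha G α)) μ := by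
    intro i
    exact key i (Finset.mem_of_mem_erase i.2) (Finset.ne_of_mem_erase i.2)
  let f : S → ↥(Module.End.eigenspace (Matrix.toLin' (Balpha G α)) μ) :=
    fun i => ⟨v i, hvmem i⟩
  have hliv : LinearIndependent ℝ v := by
    rw [Fintype.linearIndependent_iff]
    intro g hg i₀
    have h := congrFun hg (i₀ : V)
    have hy₀ne : (i₀ : V) ≠ y₀ := Finset.ne_of_mem_erase i₀.2
    simp only [Finset.sum_apply, Pi.smul_apply, Pi.sub_apply, smul_eq_mul,
      Pi.zero_apply, v, Pi.single_apply, hy₀ne, if_false, sub_zero, mul_ite,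
      mul_one, mul_zero] at h
    simp only [Subtype.coe_inj, Finset.sum_ite_eq, Finset.mem_univ, if_true] at h
    exact h
  have hlif : LinearIndependent ℝ f := by
    have : v = (Submodule.subtype _) ∘ f := rfl
    exact (this ▸ hliv).of_comp (Submodule.subtype _)
  have hcard := hlif.fintype_card_le_finrank
  have hS : Fintype.card {x // x ∈ S} = W.card - 1 := by
    rw [Fintype.card_coe]
    exact Finset.card_erase_of_mem hy₀
  exact hS ▸ hcard
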